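/- Assume the standard setup, and let ℓ ≥ 3 be an integer with q ≡ 2^ℓ − 1 (mod 2^{ℓ+1}). Let L be the unique subfield of F with q elements, let m = (q0−1)/2, let H_m be the unique subgroup of Fˣ of order m(q+1), and let D ∈ L be a nonzero element that is not a square in L. Suppose that for every α ∈ L with α ≠ 0 there exist x1, x2, x3, y1, y2, y3 ∈ L satisfying x1 + x2 + x3 = α, y1 + y2 + y3 = 0, x1² + y1² = D, x2² + y2² = D, and x3² + y3² = D. Then every γ ∈ Fˣ satisfying (γ^{q−1})^{2^ℓ} = 1 and (γ^{q−1})^{2^{ℓ−1}} ≠ 1 can be written as γ = h1 + h2 + h3 (an equality in F) with h1, h2, h3 ∈ H_m. -/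

import Mathlib

private lemma aux_sq_eq_one {K : Type*} [Field K] {x : K} (h : x ^ 2 = 1) (h1 : x ≠ 1) :
    x = -1 := by
  have h2 : (x - 1) * (x + 1) = 0 := by linear_combination h
  rcases mul_eq_zero.mp h2 with h3 | h3
  · exact absurd (sub_eq_zero.mp h3) h1
  · exact eq_neg_of_add_eq_zero_left h3

private lemma aux_mem_subgroup {F : Type*} [Field F] [Fintype F] (H : Subgroup Fˣ) (u : Fˣ)
    (hu : u ^ Nat.card H = 1) : u ∈ H := by
  classical
  set n := Nat.card H with hn
  have hn0 : 0 < n := Nat.card_pos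
  set Sf : Finset Fˣ := Finset.univ.filter fun x => x ^ n = 1 with hSf
  set Hf : Finset Fˣ := Finset.univ.filter fun x => x ∈ H with hHf
  have hsub : Hf ⊆ Sf := by
    intro x hx
    simp only [hHf, hSf, Finset.mem_filter, Finset.mem_univ, true_and] at hx ⊢
    have hx' : (⟨x, hx⟩ : H) ^ n = 1 := by rw [hn]; exact pow_card_eq_one'
    have := congrArg (Subgroup.subtype H) hx'
    simpa using this
  have hScard : Sf.card ≤ n := by
    have hinj : Set.InjOn (fun u : Fˣ => (u : F)) Sf := fun a _ b _ h => Units.ext h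
    have hmap : ∀ x ∈ Sf, (x : F) ∈ (Polynomial.nthRoots n (1 : F)).toFinset := by
      intro x hx
      simp only [hSf, Finset.mem_filter, Finset.mem_univ, true_and] at hx
      rw [Multiset.mem_toFinset, Polynomial.mem_nthRoots hn0]
      have := congrArg (Units.val) hx
      push_cast at this
      exact this
    calc Sf.card ≤ (Polynomial.nthRoots n (1 : F)).toFinset.card :=
          Finset.card_le_card_of_injOn _ hmap hinj
      _ ≤ Multiset.card (Polynomial.nthRoots n (1 : F)) := Multiset.toFinset_card_le _
      _ ≤ n := Polynomial.card_nthRoots n 1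
  have hHcard : Hf.card = n := by
    rw [hn, Nat.card_eq_fintype_card, Fintype.card_subtype]
  have heq : Hf = Sf := Finset.eq_of_subset_of_card_le hsub (by rw [hHcard]; exact hScard)
  have hu' : u ∈ Sf := by simp [hSf, hu]
  rw [← heq] at hu'
  simpa [hHf] using hu'

/-- Standard setup, `ℓ ≥ 3`, `q ≡ 2^ℓ − 1 (mod 2^(ℓ+1))`, `D` a nonzero non-square
of the subfield `L` of cardinality `q`. If for every nonzero `α ∈ L` the system
`x1+x2+x3 = α`, `y1+y2+y3 = 0`, `xi² + yi² = D` is solvable in `L`, then every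
`γ ∈ Fˣ` with `(γ^(q−1))^(2^ℓ) = 1` and `(γ^(q−1))^(2^(ℓ−1)) ≠ 1` is a sum of
three elements of `H_m`. -/
theorem propertyPi_odd_of_system (q0 s q ℓ : ℕ) (hq0 : IsPrimePow q0)
    (hq0odd : Odd q0) (hs : Odd s) (hq : q = q0 ^ s) (hℓ : 3 ≤ ℓ)
    (hqmod : q ≡ 2 ^ ℓ - 1 [MOD 2 ^ (ℓ + 1)])
    (F : Type*) [Field F] [Fintype F] (hF : Fintype.card F = q ^ 2)
    (L : Subfield F) (hL : Nat.card L = q)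
    (m : ℕ) (hm : m = (q0 - 1) / 2)
    (Hm : Subgroup Fˣ) (hHm : Nat.card Hm = m * (q + 1))
    (D : F) (hDL : D ∈ L) (hD0 : D ≠ 0) (hDns : ¬ ∃ w ∈ L, D = w ^ 2)
    (hsys : ∀ α : F, α ∈ L → α ≠ 0 →
      ∃ x1 x2 x3 y1 y2 y3 : F,
        x1 ∈ L ∧ x2 ∈ L ∧ x3 ∈ L ∧ y1 ∈ L ∧ y2 ∈ L ∧ y3 ∈ L ∧
        x1 + x2 + x3 = α ∧ y1 + y2 + y3 = 0 ∧
        x1 ^ 2 + y1 ^ 2 = D ∧ x2 ^ 2 + y2 ^ 2 = D ∧ x3 ^ 2 + y3 ^ 2 = D) :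
    ∀ γ : Fˣ, (γ ^ (q - 1)) ^ 2 ^ ℓ = 1 → (γ ^ (q - 1)) ^ 2 ^ (ℓ - 1) ≠ 1 →
      ∃ h1 h2 h3 : Fˣ, h1 ∈ Hm ∧ h2 ∈ Hm ∧ h3 ∈ Hm ∧
        (h1 : F) + (h2 : F) + (h3 : F) = (γ : F) := by
  classical
  intro γ hg1 hg2
  -- Arithmetic consequences of `q ≡ 2^ℓ - 1 [MOD 2^(ℓ+1)]`.
  obtain ⟨ℓ', rfl⟩ : ∃ ℓ', ℓ = 3 + ℓ' := ⟨ℓ - 3, by omega⟩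
  set A := 2 ^ ℓ' with hA
  have hA1 : 1 ≤ A := Nat.one_le_two_pow
  have h2ℓ : (2 : ℕ) ^ (3 + ℓ') = 8 * A := by rw [pow_add]; norm_num; exact hA.symm
  have h2ℓ1 : (2 : ℕ) ^ (2 + ℓ') = 4 * A := by rw [pow_add]; norm_num; exact hA.symm
  have h2ℓp1 : (2 : ℕ) ^ (3 + ℓ' + 1) = 16 * A := by
    rw [show 3 + ℓ' + 1 = 4 + ℓ' from by omega, pow_add]; norm_num; exact hA.symm
  have hqm : q % (16 * A) = 8 * A - 1 := by
    have h := hqmod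
    unfold Nat.ModEq at h
    rw [h2ℓp1, h2ℓ] at h
    have hlt : 8 * A - 1 < 16 * A := by omega
    rwa [Nat.mod_eq_of_lt hlt] at h
  have hqa : q = 16 * A * (q / (16 * A)) + (8 * A - 1) := by
    have := Nat.div_add_mod q (16 * A); omega
  set a := q / (16 * A) with ha
  set B := A * a with hB
  have hqa' : q = 16 * B + (8 * A - 1) := by rw [hqa, hB]; ring_nf
  set Q1 := 8 * B + 4 * A - 1 with hQ1def
  have hq2Q1 : q = 2 * Q1 + 1 := by omega
  set u4 := 4 * B + 2 * A - 1 with hu4def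
  have hqu4 : q = 4 * u4 + 3 := by omega
  have hq7 : 7 ≤ q := by omega
  have hqp1 : q + 1 = 8 * A * (2 * a + 1) := by
    have h16 : q + 1 = 16 * B + 8 * A := by omega
    rw [h16, hB]; ring
  -- ε := (γ^(q-1))^(2^(ℓ-1)) equals -1.
  rw [h2ℓ] at hg1
  rw [show 3 + ℓ' - 1 = 2 + ℓ' from by omega, h2ℓ1] at hg2
  set εu := (γ ^ (q - 1)) ^ (4 * A) with hεu
  have hεsq : εu ^ 2 = 1 := by
    rw [hεu, ← pow_mul, show 4 * A * 2 = 8 * A from by ring]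
    exact hg1
  have hεF : ((εu : F)) ^ 2 = 1 := by
    have := congrArg Units.val hεsq
    simpa using this
  have hεne : (εu : F) ≠ 1 := fun h => hg2 (Units.val_eq_one.mp h)
  have hεm1 : (εu : F) = -1 := aux_sq_eq_one hεF hεne
  -- b := γ^(q+1) satisfies b^Q1 = -1.
  set g := (γ : F) with hgdef
  have hg0 : g ≠ 0 := Units.ne_zero γ
  set b := g ^ (q + 1) with hb
  have hb0 : b ≠ 0 := pow_ne_zero _ hg0
  have hεval : (εu : F) = (g ^ (q - 1)) ^ (4 * A) := by rw [hεu]; push_cast; rfl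
  have hbQ1 : b ^ Q1 = -1 := by
    have e1 : (q + 1) * Q1 = ((q - 1) * (4 * A)) * (2 * a + 1) := by
      rw [hqp1, show q - 1 = 2 * Q1 from by omega]
      ring
    calc b ^ Q1 = g ^ ((q + 1) * Q1) := by rw [hb, ← pow_mul]
      _ = ((g ^ (q - 1)) ^ (4 * A)) ^ (2 * a + 1) := by
          rw [← pow_mul, ← pow_mul, e1, mul_assoc]
      _ = ((εu : F)) ^ (2 * a + 1) := by rw [hεval]
      _ = (-1) ^ (2 * a + 1) := by rw [hεm1]
      _ = -1 := Odd.neg_one_pow ⟨a, by ring⟩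
  -- γ^(q²-1) = 1.
  have hcardU : Fintype.card Fˣ = q * q - 1 := by
    rw [Fintype.card_units, hF, pow_two]
  have hγ1 : g ^ (q * q - 1) = 1 := by
    have h : γ ^ Fintype.card Fˣ = 1 := pow_card_eq_one
    rw [hcardU] at h
    have h2 := congrArg Units.val h
    simpa using h2
  -- Facts about L.
  haveI instLF : Fintype L := Fintype.ofFinite L
  have hcardL : Fintype.card L = q := by rw [← Nat.card_eq_fintype_card]; exact hL
  have hpowL : ∀ z : F, z ∈ L → z ^ q = z := by
    intro z hz
    have h1 := FiniteField.pow_card (⟨z, hz⟩ : L)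
    rw [hcardL] at h1
    have h2 := congrArg (fun t : L => (t : F)) h1
    push_cast at h2
    exact h2
  have hmemL : ∀ z : F, z ^ q = z → z ∈ L := by
    intro z hz
    set P : Polynomial F := Polynomial.X ^ q - Polynomial.X with hP
    have hdX : (Polynomial.X : Polynomial F).natDegree
        < (Polynomial.X ^ q : Polynomial F).natDegree := by
      rw [Polynomial.natDegree_X_pow, Polynomial.natDegree_X]; omega
    have hPdeg : P.natDegree = q := by
      rw [hP, Polynomial.natDegree_sub_eq_left_of_natDegree_lt hdX,
        Polynomial.natDegree_X_pow]
    have hPne : P ≠ 0 := by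
      intro h; rw [h] at hPdeg; simp at hPdeg; omega
    have hroot : ∀ w : F, w ^ q = w → w ∈ P.roots.toFinset := by
      intro w hw
      rw [Multiset.mem_toFinset, Polynomial.mem_roots hPne]
      simp [hP, Polynomial.IsRoot, sub_eq_zero, hw]
    set Lf : Finset F := Finset.univ.image (fun t : L => (t : F)) with hLf
    have hLfcard : Lf.card = q := by
      rw [hLf, Finset.card_image_of_injective _ Subtype.coe_injective,
        Finset.card_univ, hcardL]
    have hsub : Lf ⊆ P.roots.toFinset := by
      intro w hw
      rw [hLf, Finset.mem_image] at hw
      obtain ⟨t, _, rfl⟩ := hw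
      exact hroot _ (hpowL _ t.2)
    have hrcard : P.roots.toFinset.card ≤ q :=
      le_trans (Multiset.toFinset_card_le _) (hPdeg ▸ Polynomial.card_roots' P)
    have heq : Lf = P.roots.toFinset :=
      Finset.eq_of_subset_of_card_le hsub (by rw [hLfcard]; exact hrcard)
    have hz' : z ∈ Lf := heq ▸ hroot z hz
    rw [hLf, Finset.mem_image] at hz'
    obtain ⟨t, _, ht⟩ := hz'
    rw [← ht]; exact t.2
  -- b ∈ L.
  have hbq : b ^ q = b := by
    have hNN : 1 ≤ q * q := Nat.one_le_iff_ne_zero.mpr (by positivity)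
    have e : (q + 1) * q = (q * q - 1) + (q + 1) := by zify [hNN]; ring
    rw [hb, ← pow_mul, e, pow_add, hγ1, one_mul]
  have hbmem : b ∈ L := hmemL b hbq
  -- The character of L is odd.
  haveI := ringChar.charP L
  have hql2 : ringChar L ≠ 2 := by
    obtain ⟨n2, hpr2, hc2⟩ := FiniteField.card L (ringChar L)
    intro h2
    rw [h2, hcardL] at hc2
    have : 2 ∣ q := hc2 ▸ dvd_pow_self 2 n2.pos.ne'
    omega
  have hq2div : Fintype.card L / 2 = Q1 := by rw [hcardL]; omega
  -- D and b in L.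
  set dL : L := ⟨D, hDL⟩ with hdLdef
  have hdL0 : dL ≠ 0 := by
    intro h
    exact hD0 (by simpa [hdLdef, Subtype.ext_iff] using h)
  have hDnsL : ¬ IsSquare dL := by
    rintro ⟨y, hy⟩
    refine hDns ⟨(y : F), y.2, ?_⟩
    have := congrArg (fun t : L => (t : F)) hy
    push_cast at this
    rw [show D = (dL : F) from rfl, this]; ring
  have hdpow : dL ^ Q1 = -1 := by
    have hdQ1ne : dL ^ Q1 ≠ 1 := by
      intro h
      exact hDnsL ((FiniteField.isSquare_iff hql2 hdL0).mpr (by rw [hq2div]; exact h))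
    have hdsq : (dL ^ Q1) ^ 2 = 1 := by
      rw [← pow_mul, show Q1 * 2 = Fintype.card L - 1 from by rw [hcardL]; omega]
      exact FiniteField.pow_card_sub_one_eq_one dL hdL0
    exact aux_sq_eq_one hdsq hdQ1ne
  set bL : L := ⟨b, hbmem⟩ with hbLdef
  have hbL0 : bL ≠ 0 := by
    intro h
    exact hb0 (by simpa [hbLdef, Subtype.ext_iff] using h)
  have hbLpow : bL ^ Q1 = -1 := by
    apply Subtype.coe_injective
    push_cast
    exact hbQ1
  -- b * D is a square in L.
  have hbd : IsSquare (bL * dL) := by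
    rw [FiniteField.isSquare_iff hql2 (mul_ne_zero hbL0 hdL0), hq2div, mul_pow,
      hbLpow, hdpow]
    ring
  obtain ⟨σL, hσL⟩ := hbd
  set σ : F := (σL : F) with hσdef
  have hσmem : σ ∈ L := σL.2
  have hσσ : σ * σ = b * D := by
    have := congrArg (fun t : L => (t : F)) hσL
    push_cast at this
    exact this.symm
  have hσ0 : σ ≠ 0 := by
    intro h
    rw [h, mul_zero] at hσσ
    exact mul_ne_zero hb0 hD0 hσσ.symm
  -- A square root of -1 in F.
  have hsqm1 : IsSquare (-1 : F) := by
    rw [FiniteField.isSquare_neg_one_iff, hF]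
    have hmod : q ^ 2 % 4 = 1 := by
      rw [Nat.pow_mod, show q % 4 = 3 from by omega]
    omega
  obtain ⟨i, hi⟩ := hsqm1
  have hii : i * i = -1 := hi.symm
  have hi4 : i ^ 4 = 1 := by
    calc i ^ 4 = (i * i) * (i * i) := by ring
      _ = 1 := by rw [hii]; ring
  have hi3 : i ^ 3 = -i := by
    calc i ^ 3 = (i * i) * i := by ring
      _ = -i := by rw [hii]; ring
  have hiq : i ^ q = -i := by
    calc i ^ q = i ^ (4 * u4 + 3) := by rw [← hqu4]
      _ = (i ^ 4) ^ u4 * i ^ 3 := by rw [← pow_mul, ← pow_add]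
      _ = -i := by rw [hi4, one_pow, hi3, one_mul]
  -- The Frobenius x ↦ x^q is additive.
  obtain ⟨p, k, hp, hk, hq0pk⟩ := hq0
  have hpN : p.Prime := Nat.prime_iff.mpr hp
  have hqpk : q = p ^ (k * s) := by rw [hq, ← hq0pk, ← pow_mul]
  haveI := ringChar.charP F
  obtain ⟨n, hrp, hcF⟩ := FiniteField.card F (ringChar F)
  have hq2eq : Fintype.card F = p ^ (k * s * 2) := by
    rw [hF, hqpk, ← pow_mul]
  have hchar : ringChar F = p := by
    have h1 : ringChar F ∣ p ^ (k * s * 2) := by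
      rw [← hq2eq, hcF]
      exact dvd_pow_self _ n.pos.ne'
    exact (Nat.prime_dvd_prime_iff_eq hrp hpN).mp (hrp.dvd_of_dvd_pow h1)
  haveI hCharP : CharP F p := by rw [← hchar]; exact ringChar.charP F
  haveI : Fact p.Prime := ⟨hpN⟩
  have hfrob : ∀ x y : F, (x + y) ^ q = x ^ q + y ^ q := by
    intro x y
    have h := add_pow_char_pow (R := F) (x := x) (y := y) (p := p) (n := k * s)
    rwa [← hqpk] at h
  -- Key computation.
  have hkey : ∀ x y : F, x ∈ L → y ∈ L → x ^ 2 + y ^ 2 = D →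
      (x + y * i) ≠ 0 ∧ (x + y * i) ^ (q + 1) = D := by
    intro x y hx hy hxy
    have hq1 : (x + y * i) ^ q = x - y * i := by
      rw [hfrob x (y * i), hpowL x hx, mul_pow, hpowL y hy, hiq]
      ring
    have hprod : (x - y * i) * (x + y * i) = D := by
      linear_combination hxy - y ^ 2 * hii
    constructor
    · intro h0
      apply hD0
      rw [← hprod, h0, mul_zero]
    · rw [pow_succ, hq1, hprod]
  -- c := γ/σ satisfies c^(q+1) * D = 1.
  set c := g / σ with hc
  have hc0 : c ≠ 0 := div_ne_zero hg0 hσ0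
  have hcD : c ^ (q + 1) * D = 1 := by
    have hσq : σ ^ (q + 1) = b * D := by
      rw [pow_succ, hpowL σ hσmem, hσσ]
    rw [hc, div_pow, hσq, ← hb]
    field_simp
  -- Solve the system for α = σ.
  obtain ⟨x1, x2, x3, y1, y2, y3, hx1, hx2, hx3, hy1, hy2, hy3, hsx, hsy, hd1, hd2, hd3⟩ :=
    hsys σ hσmem hσ0
  obtain ⟨hne1, hp1⟩ := hkey x1 y1 hx1 hy1 hd1
  obtain ⟨hne2, hp2⟩ := hkey x2 y2 hx2 hy2 hd2
  obtain ⟨hne3, hp3⟩ := hkey x3 y3 hx3 hy3 hd3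
  have he1 : (c * (x1 + y1 * i)) ^ (q + 1) = 1 := by rw [mul_pow, hp1]; exact hcD
  have he2 : (c * (x2 + y2 * i)) ^ (q + 1) = 1 := by rw [mul_pow, hp2]; exact hcD
  have he3 : (c * (x3 + y3 * i)) ^ (q + 1) = 1 := by rw [mul_pow, hp3]; exact hcD
  -- Membership in Hm.
  have hmemHm : ∀ (e : F) (he0 : e ≠ 0), e ^ (q + 1) = 1 → Units.mk0 e he0 ∈ Hm := by
    intro e he0 he
    apply aux_mem_subgroup
    rw [hHm]
    have hval : ((Units.mk0 e he0 : Fˣ) : F) ^ (m * (q + 1)) = 1 := by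
      rw [Units.val_mk0, mul_comm, pow_mul, he, one_pow]
    apply Units.val_eq_one.mp
    rw [Units.val_pow_eq_pow_val]
    exact hval
  refine ⟨Units.mk0 _ (mul_ne_zero hc0 hne1), Units.mk0 _ (mul_ne_zero hc0 hne2),
    Units.mk0 _ (mul_ne_zero hc0 hne3), hmemHm _ _ he1, hmemHm _ _ he2, hmemHm _ _ he3, ?_⟩
  simp only [Units.val_mk0]
  calc c * (x1 + y1 * i) + c * (x2 + y2 * i) + c * (x3 + y3 * i)
      = c * ((x1 + x2 + x3) + (y1 + y2 + y3) * i) := by ring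
    _ = c * σ := by rw [hsx, hsy]; ring
    _ = g := by rw [hc]; exact div_mul_cancel₀ g hσ0
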